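/- Let M' be a pseudo-Riemannian (non-degenerate) submanifold of a semi-Weyl manifold admitting torsion (M,g,η,∇). Then (M',g',η',∇') is also a semi-Weyl manifold admitting torsion, where g' and η' are the induced tensors on M' and ∇'_X Y is the tangential component of ∇_X Y for X,Y tangent to M'. Moreover, the semi-dual connection of ∇' with respect to (g',η') equals the induced connection on M' of the semi-dual connection of ∇ with respect to (g,η). -/
import Mathlib


/-!
We work in a concrete model of a pseudo-Riemannian manifold: the manifold `M` is
(an open chart of) a real normed space `E`, vector fields are maps `E → E`,
smooth functions are maps `E → ℝ`, a (pseudo-Riemannian) metric is a field of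
symmetric non-degenerate bilinear forms `g : E → E →ₗ[ℝ] E →ₗ[ℝ] ℝ`, a `1`-form
is a field of linear forms `η : E → E →ₗ[ℝ] ℝ`, and an affine connection is an
operation `D : (E → E) → (E → E) → (E → E)` on vector fields which is
function-linear in the first argument and a derivation in the second one.
-/

open scoped BigOperators

noncomputable section

variable {E : Type*} [NormedAddCommGroup E] [NormedSpace ℝ E]

/-- The derivative `X(f)` of a function `f` along a vector field `X`. -/
def dirD (f : E → ℝ) (X : E → E) : E → ℝ := fun x => fderiv ℝ f x (X x)

/-- The Lie bracket `[X, Y]` of two vector fields. -/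
def lieB (X Y : E → E) : E → E := fun x => fderiv ℝ Y x (X x) - fderiv ℝ X x (Y x)

/-- The torsion tensor `T^∇(X,Y) = ∇_X Y − ∇_Y X − [X,Y]` of an affine connection. -/
def tors (D : (E → E) → (E → E) → (E → E)) (X Y : E → E) : E → E :=
  fun x => D X Y x - D Y X x - lieB X Y x

/-- The curvature tensor `R^∇(X,Y)Z = ∇_X∇_Y Z − ∇_Y∇_X Z − ∇_{[X,Y]}Z`. -/
def curv (D : (E → E) → (E → E) → (E → E)) (X Y Z : E → E) : E → E :=
  fun x => D X (D Y Z) x - D Y (D X Z) x - D (lieB X Y) Z x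

/-- The covariant derivative `(∇_X g)(Y, Z)` of the metric `g`. -/
def covg (g : E → E →ₗ[ℝ] E →ₗ[ℝ] ℝ) (D : (E → E) → (E → E) → (E → E))
    (X Y Z : E → E) : E → ℝ :=
  fun x => fderiv ℝ (fun y => g y (Y y) (Z y)) x (X x)
    - g x (D X Y x) (Z x) - g x (Y x) (D X Z x)

/-- `g` is a pseudo-Riemannian metric: a symmetric non-degenerate bilinear form
at every point. -/
def IsMetric (g : E → E →ₗ[ℝ] E →ₗ[ℝ] ℝ) : Prop :=
  (∀ x u v, g x u v = g x v u) ∧ ∀ x u, (∀ v, g x u v = 0) → u = 0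

/-- `D` is an affine connection on vector fields. -/
def IsConn (D : (E → E) → (E → E) → (E → E)) : Prop :=
  (∀ X Y Z, D (fun x => X x + Y x) Z = fun x => D X Z x + D Y Z x) ∧
  (∀ (f : E → ℝ) (X Y), D (fun x => f x • X x) Y = fun x => f x • D X Y x) ∧
  (∀ X Y Z, D X (fun x => Y x + Z x) = fun x => D X Y x + D X Z x) ∧
  (∀ (f : E → ℝ) (X Y), D X (fun x => f x • Y x)
      = fun x => dirD f X x • Y x + f x • D X Y x)

/-- The connection `D` is flat: its curvature tensor vanishes identically. -/
def FlatConn (D : (E → E) → (E → E) → (E → E)) : Prop := ∀ X Y Z x, curv D X Y Z x = 0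

/-- The connection `D` is torsion-free: its torsion tensor vanishes identically. -/
def TorsFree (D : (E → E) → (E → E) → (E → E)) : Prop := ∀ X Y x, tors D X Y x = 0

/-- `(M, g, ∇)` is a statistical manifold admitting torsion (SMT):
`(∇_X g)(Y,Z) = (∇_Y g)(X,Z) − g(T^∇(X,Y),Z)`. -/
def IsSMT (g : E → E →ₗ[ℝ] E →ₗ[ℝ] ℝ) (D : (E → E) → (E → E) → (E → E)) : Prop :=
  ∀ X Y Z x, covg g D X Y Z x = covg g D Y X Z x - g x (tors D X Y x) (Z x)

/-- `(M, g, η, ∇)` is a semi-Weyl manifold admitting torsion (SWMT):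
`(∇_X g)(Y,Z) + η(X)g(Y,Z) = (∇_Y g)(X,Z) + η(Y)g(X,Z) − g(T^∇(X,Y),Z)`. -/
def IsSWMT (g : E → E →ₗ[ℝ] E →ₗ[ℝ] ℝ) (η : E → E →ₗ[ℝ] ℝ)
    (D : (E → E) → (E → E) → (E → E)) : Prop :=
  ∀ X Y Z x, covg g D X Y Z x + η x (X x) * g x (Y x) (Z x)
    = covg g D Y X Z x + η x (Y x) * g x (X x) (Z x) - g x (tors D X Y x) (Z x)

/-- `D` and `Ds` are dual connections with respect to `g`:
`X(g(Y,Z)) = g(∇_X Y, Z) + g(Y, ∇*_X Z)`. -/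
def DualConn (g : E → E →ₗ[ℝ] E →ₗ[ℝ] ℝ) (D Ds : (E → E) → (E → E) → (E → E)) : Prop :=
  ∀ X Y Z x, fderiv ℝ (fun y => g y (Y y) (Z y)) x (X x)
    = g x (D X Y x) (Z x) + g x (Y x) (Ds X Z x)

/-- `D` and `Ds` are semi-dual connections with respect to `(g, η)`:
`X(g(Y,Z)) = g(∇_X Y, Z) + g(Y, ∇*_X Z) − η(X)g(Y,Z)`. -/
def SemiDualConn (g : E → E →ₗ[ℝ] E →ₗ[ℝ] ℝ) (η : E → E →ₗ[ℝ] ℝ)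
    (D Ds : (E → E) → (E → E) → (E → E)) : Prop :=
  ∀ X Y Z x, fderiv ℝ (fun y => g y (Y y) (Z y)) x (X x)
    = g x (D X Y x) (Z x) + g x (Y x) (Ds X Z x) - η x (X x) * g x (Y x) (Z x)

/-- The Ricci tensor `Ric(Y,Z) = Σᵢ εᵢ g(R(Eᵢ,Y)Z, Eᵢ)` of a connection, computed
via a `g`-orthonormal frame `Efr` with signs `eps`. -/
def ricci (g : E → E →ₗ[ℝ] E →ₗ[ℝ] ℝ) (D : (E → E) → (E → E) → (E → E))
    {n : ℕ} (Efr : Fin n → E → E) (eps : Fin n → ℝ) (Y Z : E → E) : E → ℝ :=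
  fun x => ∑ i, eps i * g x (curv D (Efr i) Y Z x) (Efr i x)

/-- `trace (T_Y) = Σᵢ εᵢ g(T^∇(Eᵢ,Y), Eᵢ)`, the trace of `X ↦ T^∇(X,Y)`. -/
def trTor (g : E → E →ₗ[ℝ] E →ₗ[ℝ] ℝ) (D : (E → E) → (E → E) → (E → E))
    {n : ℕ} (Efr : Fin n → E → E) (eps : Fin n → ℝ) (Y : E → E) : E → ℝ :=
  fun x => ∑ i, eps i * g x (tors D (Efr i) Y x) (Efr i x)

/-- A vector field is tangent to the submanifold determined by the field of
(tangential) projections `P`. -/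
def Tang (P : E → E →ₗ[ℝ] E) (X : E → E) : Prop := ∀ x, P x (X x) = X x

/-- The projection of a vector field tangent to a lightlike hypersurface onto the
screen distribution, `P X = X − g(X,N)ξ`. -/
def scrP (g : E → E →ₗ[ℝ] E →ₗ[ℝ] ℝ) (ξ N : E → E) (X : E → E) : E → E :=
  fun x => X x - g x (X x) (N x) • ξ x

/-- The induced connection on sections of the screen distribution of a lightlike
hypersurface: the `S(TM')`-component of `∇_X Y` in `TM = S(TM') ⊕ Rad(TM') ⊕ tr(TM')`. -/
def scrConn (g : E → E →ₗ[ℝ] E →ₗ[ℝ] ℝ) (ξ N : E → E)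
    (D : (E → E) → (E → E) → (E → E)) : (E → E) → (E → E) → (E → E) :=
  fun X Y x => D X Y x - g x (D X Y x) (N x) • ξ x - g x (D X Y x) (ξ x) • N x

end

/-- A non-degenerate (pseudo-Riemannian) submanifold `M'` of a
semi-Weyl manifold admitting torsion `(M,g,η,∇)` — encoded by the field `P` of
`g`-orthogonal projections onto the (involutive) tangent distribution of `M'` — is
again a SWMT with the induced structure `(g',η',∇')`, `∇'_X Y = P(∇_X Y)`; moreover
the semi-dual connection of `∇'` with respect to `(g',η')` is the induced connection
`P ∘ ∇*` of the semi-dual connection `∇*` of `∇` with respect to `(g,η)`. -/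
theorem statement12 {E : Type*} [NormedAddCommGroup E] [NormedSpace ℝ E]
    (g : E → E →ₗ[ℝ] E →ₗ[ℝ] ℝ) (hg : IsMetric g) (η : E → E →ₗ[ℝ] ℝ)
    (D : (E → E) → (E → E) → (E → E)) (hD : IsConn D)
    (hsw : IsSWMT g η D)
    (Ds : (E → E) → (E → E) → (E → E)) (hsemidual : SemiDualConn g η D Ds)
    (P : E → E →ₗ[ℝ] E)
    (hidem : ∀ x v, P x (P x v) = P x v)
    (hsymP : ∀ x u v, g x (P x u) v = g x u (P x v))
    (hnd : ∀ x u, P x u = u → (∀ v, P x v = v → g x u v = 0) → u = 0)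
    (hinv : ∀ X Y, Tang P X → Tang P Y → Tang P (lieB X Y)) :
    (∀ X Y Z, Tang P X → Tang P Y → Tang P Z → ∀ x,
        covg g (fun X' Y' x' => P x' (D X' Y' x')) X Y Z x + η x (X x) * g x (Y x) (Z x)
          = covg g (fun X' Y' x' => P x' (D X' Y' x')) Y X Z x
              + η x (Y x) * g x (X x) (Z x)
            - g x (tors (fun X' Y' x' => P x' (D X' Y' x')) X Y x) (Z x)) ∧
    (∀ X Y Z, Tang P X → Tang P Y → Tang P Z → ∀ x,
        fderiv ℝ (fun y => g y (Y y) (Z y)) x (X x)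
          = g x (P x (D X Y x)) (Z x) + g x (Y x) (P x (Ds X Z x))
            - η x (X x) * g x (Y x) (Z x)) := by

  have key : ∀ (x w : E) (Z : E → E), Tang P Z → g x (P x w) (Z x) = g x w (Z x) := by
    intro x w Z hZ; rw [hsymP, hZ x]
  have key2 : ∀ (x w : E) (Y : E → E), Tang P Y → g x (Y x) (P x w) = g x (Y x) w := by
    intro x w Y hY; rw [hg.1, key x w Y hY, hg.1]
  constructor
  · intro X Y Z hX hY hZ x
    have h := hsw X Y Z x
    simp only [covg, tors] at h ⊢
    rw [key _ _ _ hZ, key _ _ _ hZ, key2 _ _ _ hY, key2 _ _ _ hX]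
    have ht : g x (P x (D X Y x) - P x (D Y X x) - lieB X Y x) (Z x)
        = g x (D X Y x - D Y X x - lieB X Y x) (Z x) := by
      simp only [map_sub, LinearMap.sub_apply, key _ _ _ hZ]
    rw [ht]
    linarith [h]
  · intro X Y Z hX hY hZ x
    have h := hsemidual X Y Z x
    rw [key _ _ _ hZ, key2 _ _ _ hY]
    exact h
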